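/- If m ≥ 2 and n ≥ 2 are integers with n ≡ 0 (mod 3), then the bondage number of K_m ⊠ P_n satisfies b(K_m ⊠ P_n) ≤ ⌈m/2⌉. -/

import Mathlib

open SimpleGraph Finset

/-- `D` is a dominating set of `G`: every vertex is in `D` or adjacent to a vertex of `D`. -/
def SimpleGraph.IsDominatingSet {V : Type*} (G : SimpleGraph V) (D : Set V) : Prop :=
  ∀ v : V, v ∈ D ∨ ∃ u ∈ D, G.Adj u v

/-- The domination number of a finite graph. -/
noncomputable def SimpleGraph.dominationNumber {V : Type*} [Fintype V]
    (G : SimpleGraph V) : ℕ :=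
  sInf {k | ∃ D : Finset V, D.card = k ∧ G.IsDominatingSet ↑D}

/-- The bondage number of a finite graph: the least size of a set of edges whose removal
increases the domination number. -/
noncomputable def SimpleGraph.bondageNumber {V : Type*} [Fintype V]
    (G : SimpleGraph V) : ℕ :=
  sInf {k | ∃ Z : Finset (Sym2 V), Z.card = k ∧ (↑Z : Set (Sym2 V)) ⊆ G.edgeSet ∧
    G.dominationNumber < (G.deleteEdges ↑Z).dominationNumber}

/-- The strong product of two simple graphs. -/
def SimpleGraph.strongProd {V W : Type*} (G : SimpleGraph V) (H : SimpleGraph W) :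
    SimpleGraph (V × W) :=
  SimpleGraph.fromRel (fun a b =>
    (a.1 = b.1 ∧ H.Adj a.2 b.2) ∨ (G.Adj a.1 b.1 ∧ a.2 = b.2) ∨
      (G.Adj a.1 b.1 ∧ H.Adj a.2 b.2))

infixl:70 " ⊠ " => SimpleGraph.strongProd

lemma myadj {m n : ℕ} (a b : Fin m × Fin n) :
    ((⊤ : SimpleGraph (Fin m)) ⊠ pathGraph n).Adj a b ↔
      a ≠ b ∧ (a.2.val = b.2.val ∨ a.2.val + 1 = b.2.val ∨ b.2.val + 1 = a.2.val) := by
  simp only [SimpleGraph.strongProd, fromRel_adj, top_adj, pathGraph_adj]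
  constructor
  · rintro ⟨hne, h⟩
    refine ⟨hne, ?_⟩
    rcases h with (⟨_, h⟩ | ⟨_, h⟩ | ⟨_, h⟩) | (⟨_, h⟩ | ⟨_, h⟩ | ⟨_, h⟩) <;> omega
  · rintro ⟨hne, h⟩
    refine ⟨hne, ?_⟩
    by_cases h2 : a.2 = b.2
    · have h1 : a.1 ≠ b.1 := fun h1 => hne (Prod.ext h1 h2)
      exact Or.inl (Or.inr (Or.inl ⟨h1, h2⟩))
    · have hcol : a.2.val + 1 = b.2.val ∨ b.2.val + 1 = a.2.val := by
        rcases h with h | h | h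
        · exact absurd (Fin.ext h) h2
        · exact Or.inl h
        · exact Or.inr h
      by_cases h1 : a.1 = b.1
      · exact Or.inl (Or.inl ⟨h1, hcol⟩)
      · exact Or.inl (Or.inr (Or.inr ⟨h1, hcol⟩))

/-- **Lemma.** If `m ≥ 2` and `n ≡ 0 (mod 3)` (`n ≥ 2`), then
`b(K_m ⊠ P_n) ≤ ⌈m/2⌉`. -/
theorem bondage_le_of_mod_three_eq_zero (m n : ℕ) (hm : 2 ≤ m) (hn : 2 ≤ n)
    (h3 : n % 3 = 0) :
    ((⊤ : SimpleGraph (Fin m)) ⊠ pathGraph n).bondageNumber ≤ (m + 1) / 2 := by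
  obtain ⟨k, hk⟩ : ∃ k, n = 3 * k := ⟨n / 3, by omega⟩
  have hk1 : 1 ≤ k := by omega
  have h0n : 0 < n := by omega
  have h1n : 1 < n := by omega
  have h0m : 0 < m := by omega
  set G := ((⊤ : SimpleGraph (Fin m)) ⊠ pathGraph n) with hG
  have hadj : ∀ a b : Fin m × Fin n, G.Adj a b ↔
      a ≠ b ∧ (a.2.val = b.2.val ∨ a.2.val + 1 = b.2.val ∨ b.2.val + 1 = a.2.val) :=
    fun a b => myadj a b
  set ed : ℕ → Sym2 (Fin m × Fin n) := fun i =>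
    if h : 2*i+1 < m then
      s(((⟨2*i, by omega⟩ : Fin m), (⟨1, h1n⟩ : Fin n)), ((⟨2*i+1, h⟩ : Fin m), (⟨1, h1n⟩ : Fin n)))
    else
      s(((⟨m-1, by omega⟩ : Fin m), (⟨1, h1n⟩ : Fin n)), ((⟨m-1, by omega⟩ : Fin m), (⟨0, h0n⟩ : Fin n)))
    with hed
  set Z : Finset (Sym2 (Fin m × Fin n)) := (Finset.range ((m+1)/2)).image ed with hZ
  -- Z consists of edges
  have hZsub : (↑Z : Set (Sym2 (Fin m × Fin n))) ⊆ G.edgeSet := by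
    intro e he
    simp only [hZ, Finset.coe_image, Set.mem_image, Finset.mem_coe, Finset.mem_range] at he
    obtain ⟨i, hi, rfl⟩ := he
    rw [hed]
    beta_reduce
    by_cases h : 2*i+1 < m
    · rw [dif_pos h, mem_edgeSet, hadj]
      refine ⟨?_, Or.inl rfl⟩
      intro heq
      have h1 : (2*i : ℕ) = 2*i+1 := congrArg (fun p => p.1.val) heq
      omega
    · rw [dif_neg h, mem_edgeSet, hadj]
      refine ⟨?_, Or.inr (Or.inr rfl)⟩
      intro heq
      have h1 : (1 : ℕ) = 0 := congrArg (fun p => p.2.val) heq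
      omega
  -- γ(G) ≤ k
  have hdomUB : G.dominationNumber ≤ k := by
    set D0 : Finset (Fin m × Fin n) :=
      (range k).image (fun j : ℕ =>
        ((⟨0, h0m⟩ : Fin m), (⟨(3*j+1) % n, Nat.mod_lt _ h0n⟩ : Fin n))) with hD0
    have hdom : G.IsDominatingSet ↑D0 := by
      intro v
      have hv2 := v.2.isLt
      have hjk : v.2.val / 3 < k := by omega
      obtain ⟨u, hu⟩ : ∃ u : Fin m × Fin n,
          u = ((⟨0, h0m⟩ : Fin m), (⟨(3*(v.2.val/3)+1) % n, Nat.mod_lt _ h0n⟩ : Fin n)) :=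
        ⟨_, rfl⟩
      have huD : u ∈ D0 := by
        rw [hu, hD0]
        exact mem_image.mpr ⟨v.2.val/3, mem_range.mpr hjk, rfl⟩
      have hu2 : u.2.val = 3*(v.2.val/3)+1 := by
        rw [hu]
        exact Nat.mod_eq_of_lt (by omega)
      by_cases hv : v = u
      · left; rw [hv]; exact huD
      · right; exact ⟨u, huD, (hadj u v).mpr ⟨Ne.symm hv, by omega⟩⟩
    calc G.dominationNumber ≤ D0.card := Nat.sInf_le ⟨D0, rfl, hdom⟩
      _ ≤ k := le_trans card_image_le (by simp)
  -- k+1 ≤ γ(G - Z)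
  have hdomLB : k + 1 ≤ (G.deleteEdges ↑Z).dominationNumber := by
    apply le_csInf
    · exact ⟨(Finset.univ : Finset (Fin m × Fin n)).card, Finset.univ, rfl,
        fun v => Or.inl (by simp)⟩
    rintro b ⟨D, rfl, hD⟩
    by_contra hcard
    push_neg at hcard
    have hcard' : D.card ≤ k := by omega
    have hdomin : ∀ v : Fin m × Fin n, ∃ u ∈ D, u = v ∨ (G.deleteEdges ↑Z).Adj u v := by
      intro v
      rcases hD v with h | ⟨u, hu, ha⟩
      · exact ⟨v, h, Or.inl rfl⟩
      · exact ⟨u, hu, Or.inr ha⟩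
    have hcol : ∀ u v : Fin m × Fin n, (G.deleteEdges ↑Z).Adj u v →
        (u.2.val = v.2.val ∨ u.2.val + 1 = v.2.val ∨ v.2.val + 1 = u.2.val) :=
      fun u v h => ((hadj u v).mp (SimpleGraph.deleteEdges_adj.mp h).1).2
    -- probe: a dominator near every column
    have probe : ∀ (c : ℕ) (hcn : c < n), ∃ u ∈ D,
        u.2.val ≤ c + 1 ∧ c ≤ u.2.val + 1 := by
      intro c hcn
      obtain ⟨w, hw⟩ : ∃ w : Fin m × Fin n, w = ((⟨0, h0m⟩ : Fin m), (⟨c, hcn⟩ : Fin n)) :=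
        ⟨_, rfl⟩
      have hwv : w.2.val = c := by rw [hw]
      obtain ⟨u, huD, hu⟩ := hdomin w
      refine ⟨u, huD, ?_⟩
      rcases hu with hu | ha
      · have h1 := hwv; rw [← hu] at h1; omega
      · have := hcol _ _ ha; omega
    set S : ℕ → Finset (Fin m × Fin n) := fun j => D.filter (fun d => d.2.val / 3 = j) with hS
    have hSmem : ∀ x j, x ∈ S j ↔ x ∈ D ∧ x.2.val / 3 = j := by
      intro x j; rw [hS]; exact mem_filter
    have hne : ∀ j, j < k → (S j).Nonempty := by
      intro j hj
      obtain ⟨u, huD, hb⟩ := probe (3*j+1) (by omega)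
      exact ⟨u, (hSmem u j).mpr ⟨huD, by omega⟩⟩
    have hcardsum : ((range k).biUnion S).card = ∑ j ∈ range k, (S j).card := by
      apply Finset.card_biUnion
      intro x _ y _ hxy
      show Disjoint (S x) (S y)
      rw [Finset.disjoint_left]
      intro a hax hay
      exact hxy (((hSmem a x).mp hax).2.symm.trans ((hSmem a y).mp hay).2)
    have hsub : (range k).biUnion S ⊆ D :=
      Finset.biUnion_subset.mpr (fun j _ => filter_subset _ _)
    have hsum_le : ∑ j ∈ range k, (S j).card ≤ k := by
      rw [← hcardsum]; exact le_trans (card_le_card hsub) hcard'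
    have hone : ∀ j ∈ range k, 1 ≤ (S j).card :=
      fun j hj => Finset.card_pos.mpr (hne j (mem_range.mp hj))
    have hcard1 : ∀ j, j < k → (S j).card = 1 := by
      intro j hj
      by_contra hne1
      have h2 : 2 ≤ (S j).card := by
        have := hone j (mem_range.mpr hj); omega
      have hlt : k < ∑ j ∈ range k, (S j).card := by
        calc k = ∑ _j ∈ range k, 1 := by simp
          _ < ∑ j ∈ range k, (S j).card :=
            Finset.sum_lt_sum hone ⟨j, mem_range.mpr hj, by omega⟩
      omega
    have hsingle : ∀ j, j < k → ∃ a, S j = {a} :=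
      fun j hj => Finset.card_eq_one.mp (hcard1 j hj)
    choose d hd using hsingle
    have hdmem : ∀ j (hj : j < k), d j hj ∈ D ∧ (d j hj).2.val / 3 = j := by
      intro j hj
      have : d j hj ∈ S j := (hd j hj) ▸ mem_singleton_self _
      exact (hSmem _ _).mp this
    have huniq : ∀ x, x ∈ D → ∀ j (hj : j < k), x.2.val / 3 = j → x = d j hj := by
      intro x hx j hj hxj
      have : x ∈ S j := (hSmem x j).mpr ⟨hx, hxj⟩
      rw [hd j hj] at this
      exact mem_singleton.mp this
    -- Claim A
    have claimA : ∀ j (hj : j < k), (d j hj).2.val ≤ 3*j + 1 := by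
      intro j
      induction j with
      | zero =>
        intro hj
        obtain ⟨u, huD, hb⟩ := probe 0 (by omega)
        have he := huniq u huD 0 hj (by omega)
        rw [← he]; omega
      | succ j ih =>
        intro hj
        have hjk : j < k := by omega
        obtain ⟨u, huD, hb⟩ := probe (3*(j+1)) (by omega)
        by_cases hblk : u.2.val / 3 = j
        · exfalso
          have hAj := ih hjk
          have he := huniq u huD j hjk hblk
          rw [← he] at hAj
          omega
        · have he := huniq u huD (j+1) hj (by omega)
          rw [← he]; omega
    -- Claim B
    have claimB : ∀ t j (hj : j < k), j + t + 1 = k → (d j hj).2.val ≠ 3*j := by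
      intro t
      induction t with
      | zero =>
        intro j hj hjk
        obtain ⟨u, huD, hb⟩ := probe (3*j+2) (by omega)
        have hlt := u.2.isLt
        have he := huniq u huD j hj (by omega)
        rw [← he]; omega
      | succ t ih =>
        intro j hj hjk hc
        obtain ⟨u, huD, hb⟩ := probe (3*j+2) (by omega)
        by_cases hub : u.2.val / 3 = j
        · have he := huniq u huD j hj hub
          rw [← he] at hc
          omega
        · have hj1 : j + 1 < k := by omega
          have he := huniq u huD (j+1) hj1 (by omega)
          have hB := ih (j+1) hj1 (by omega)
          have hm2 := (hdmem (j+1) hj1).2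
          rw [← he] at hB hm2
          omega
    have hcval : ∀ j (hj : j < k), (d j hj).2.val = 3*j + 1 := by
      intro j hj
      have h1 := claimA j hj
      have h2 := claimB (k - 1 - j) j hj (by omega)
      have h3v := (hdmem j hj).2
      omega
    -- Final contradiction
    have hk0 : 0 < k := hk1
    have hd0col : (d 0 hk0).2.val = 1 := by
      have := hcval 0 hk0; omega
    obtain ⟨a, hadef⟩ : ∃ a : Fin m, a = (d 0 hk0).1 := ⟨_, rfl⟩
    have hd0 : d 0 hk0 = (a, (⟨1, h1n⟩ : Fin n)) := by
      rw [hadef]; exact Prod.ext rfl (Fin.ext hd0col)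
    have ham := a.isLt
    rcases Nat.even_or_odd a.val with heven | hodd
    · obtain ⟨c, hc⟩ := heven
      by_cases hlt : a.val + 1 < m
      · -- bad vertex (a+1, 1)
        obtain ⟨w, hw⟩ : ∃ w : Fin m × Fin n,
            w = ((⟨a.val+1, hlt⟩ : Fin m), (⟨1, h1n⟩ : Fin n)) := ⟨_, rfl⟩
        have hwv : w.2.val = 1 := by rw [hw]
        obtain ⟨u, huD, hu⟩ := hdomin w
        have hub : u.2.val / 3 = 0 := by
          rcases hu with hu | ha2
          · have h1 := hwv; rw [← hu] at h1; omega
          · have := hcol _ _ ha2; omega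
        have he := huniq u huD 0 hk0 hub
        rw [he] at hu
        rcases hu with hu | hu
        · have h1 : (d 0 hk0).1.val = a.val + 1 := by
            rw [hu, hw]
          rw [← hadef] at h1
          omega
        · have h2i : 2*(a.val/2)+1 < m := by omega
          have hlt2 : 2*(a.val/2) < m := by omega
          have hiZ : ed (a.val/2) ∈ Z := by
            rw [hZ]
            exact mem_image.mpr ⟨a.val/2, mem_range.mpr (by omega), rfl⟩
          have hedeq : ed (a.val/2) =
              s(((⟨2*(a.val/2), hlt2⟩ : Fin m), (⟨1, h1n⟩ : Fin n)),
                ((⟨2*(a.val/2)+1, h2i⟩ : Fin m), (⟨1, h1n⟩ : Fin n))) := by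
            rw [hed]
            beta_reduce
            rw [dif_pos h2i]
          have e1 : (⟨2*(a.val/2), hlt2⟩ : Fin m) = a := Fin.ext (by
            show 2*(a.val/2) = a.val
            omega)
          have e2 : (⟨2*(a.val/2)+1, h2i⟩ : Fin m) = (⟨a.val+1, hlt⟩ : Fin m) := Fin.ext (by
            show 2*(a.val/2)+1 = a.val+1
            omega)
          have hq : ed (a.val/2) = s(d 0 hk0, w) := by
            rw [hedeq, e1, e2, hd0, hw]
          exact (SimpleGraph.deleteEdges_adj.mp hu).2
            (by rw [← hq]; exact Finset.mem_coe.mpr hiZ)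
      · -- bad vertex (a, 0)
        obtain ⟨w, hw⟩ : ∃ w : Fin m × Fin n, w = (a, (⟨0, h0n⟩ : Fin n)) := ⟨_, rfl⟩
        have hwv : w.2.val = 0 := by rw [hw]
        obtain ⟨u, huD, hu⟩ := hdomin w
        have hub : u.2.val / 3 = 0 := by
          rcases hu with hu | ha2
          · have h1 := hwv; rw [← hu] at h1; omega
          · have := hcol _ _ ha2; omega
        have he := huniq u huD 0 hk0 hub
        rw [he] at hu
        rcases hu with hu | hu
        · have h1 : (d 0 hk0).2.val = 0 := by rw [hu, hw]
          omega
        · have hnot : ¬ (2*(a.val/2)+1 < m) := by omega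
          have hm1 : m - 1 < m := by omega
          have hiZ : ed (a.val/2) ∈ Z := by
            rw [hZ]
            exact mem_image.mpr ⟨a.val/2, mem_range.mpr (by omega), rfl⟩
          have hedeq : ed (a.val/2) =
              s(((⟨m-1, hm1⟩ : Fin m), (⟨1, h1n⟩ : Fin n)),
                ((⟨m-1, hm1⟩ : Fin m), (⟨0, h0n⟩ : Fin n))) := by
            rw [hed]
            beta_reduce
            rw [dif_neg hnot]
          have e1 : (⟨m-1, hm1⟩ : Fin m) = a := Fin.ext (by
            show m - 1 = a.val
            omega)
          have hq : ed (a.val/2) = s(d 0 hk0, w) := by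
            rw [hedeq, e1, hd0, hw]
          exact (SimpleGraph.deleteEdges_adj.mp hu).2
            (by rw [← hq]; exact Finset.mem_coe.mpr hiZ)
    · obtain ⟨c, hc⟩ := hodd
      have hgt : 0 < a.val := by omega
      have hm1a : a.val - 1 < m := by omega
      obtain ⟨w, hw⟩ : ∃ w : Fin m × Fin n,
          w = ((⟨a.val-1, hm1a⟩ : Fin m), (⟨1, h1n⟩ : Fin n)) := ⟨_, rfl⟩
      have hwv : w.2.val = 1 := by rw [hw]
      obtain ⟨u, huD, hu⟩ := hdomin w
      have hub : u.2.val / 3 = 0 := by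
        rcases hu with hu | ha2
        · have h1 := hwv; rw [← hu] at h1; omega
        · have := hcol _ _ ha2; omega
      have he := huniq u huD 0 hk0 hub
      rw [he] at hu
      rcases hu with hu | hu
      · have h1 : (d 0 hk0).1.val = a.val - 1 := by rw [hu, hw]
        rw [← hadef] at h1
        omega
      · have h2i : 2*(a.val/2)+1 < m := by omega
        have hlt2 : 2*(a.val/2) < m := by omega
        have hiZ : ed (a.val/2) ∈ Z := by
          rw [hZ]
          exact mem_image.mpr ⟨a.val/2, mem_range.mpr (by omega), rfl⟩
        have hedeq : ed (a.val/2) =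
            s(((⟨2*(a.val/2), hlt2⟩ : Fin m), (⟨1, h1n⟩ : Fin n)),
              ((⟨2*(a.val/2)+1, h2i⟩ : Fin m), (⟨1, h1n⟩ : Fin n))) := by
          rw [hed]
          beta_reduce
          rw [dif_pos h2i]
        have e1 : (⟨2*(a.val/2), hlt2⟩ : Fin m) = (⟨a.val-1, hm1a⟩ : Fin m) := Fin.ext (by
          show 2*(a.val/2) = a.val - 1
          omega)
        have e2 : (⟨2*(a.val/2)+1, h2i⟩ : Fin m) = a := Fin.ext (by
          show 2*(a.val/2)+1 = a.val
          omega)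
        have hq : ed (a.val/2) = s(w, d 0 hk0) := by
          rw [hedeq, e1, e2, hd0, hw]
        have hedge : s(d 0 hk0, w) ∈ (↑Z : Set (Sym2 (Fin m × Fin n))) := by
          rw [Sym2.eq_swap, ← hq]
          exact Finset.mem_coe.mpr hiZ
        exact (SimpleGraph.deleteEdges_adj.mp hu).2 hedge
  -- assemble
  have hlt : G.dominationNumber < (G.deleteEdges ↑Z).dominationNumber := by omega
  calc G.bondageNumber ≤ Z.card := Nat.sInf_le ⟨Z, rfl, hZsub, hlt⟩
    _ ≤ (m+1)/2 := by
      have h1 : Z.card ≤ (range ((m+1)/2)).card := card_image_le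
      simpa using h1
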